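/- If λ is an eigenvalue of D_p, then λ² is an eigenvalue of L_i for some 0 ≤ i ≤ p or of L_{p+1}^{Down}; conversely, if λ ≥ 0 is an eigenvalue of some L_i (0 ≤ i ≤ p) or of L_{p+1}^{Down}, then √λ and −√λ are eigenvalues of D_p. -/
import Mathlib


open LinearMap

variable {𝕜 : Type} [RCLike 𝕜] {C : ℕ → Type}
  [∀ n, NormedAddCommGroup (C n)] [∀ n, InnerProductSpace 𝕜 (C n)]
  [∀ n, FiniteDimensional 𝕜 (C n)]

/-- The "up" part of the Dirac operator: superdiagonal blocks `B_{i+1}` (the boundary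
maps `d_{i+1}`). -/
noncomputable def diracUp (d : ∀ n : ℕ, C n →ₗ[𝕜] C (n - 1)) (p : ℕ) :
    (∀ i : Fin (p + 2), C i) →ₗ[𝕜] ∀ i : Fin (p + 2), C i :=
  LinearMap.pi fun j =>
    if h : (j : ℕ) + 1 < p + 2 then
      ((d ((j : ℕ) + 1)).comp (LinearMap.proj (⟨(j : ℕ) + 1, h⟩ : Fin (p + 2)))
        : (∀ i : Fin (p + 2), C i) →ₗ[𝕜] C (j : ℕ))
    else 0

/-- The "down" part of the Dirac operator: subdiagonal blocks `B_i^*` (adjoints of the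
boundary maps). -/
noncomputable def diracDown (d : ∀ n : ℕ, C n →ₗ[𝕜] C (n - 1)) (p : ℕ) :
    (∀ i : Fin (p + 2), C i) →ₗ[𝕜] ∀ i : Fin (p + 2), C i :=
  LinearMap.pi fun j =>
    if h : 0 < (j : ℕ) then
      ((adjoint (d (j : ℕ))).comp
          (LinearMap.proj (⟨(j : ℕ) - 1, lt_of_le_of_lt (Nat.sub_le _ _) j.isLt⟩ : Fin (p + 2)))
        : (∀ i : Fin (p + 2), C i) →ₗ[𝕜] C (j : ℕ))
    else 0

/-- The `p`-th Dirac operator: the block tridiagonal operator on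
`C 0 ⊕ C 1 ⊕ ⋯ ⊕ C (p+1)` with superdiagonal blocks the boundary maps, subdiagonal
blocks their adjoints, and zero diagonal blocks. -/
noncomputable def dirac (d : ∀ n : ℕ, C n →ₗ[𝕜] C (n - 1)) (p : ℕ) :
    (∀ i : Fin (p + 2), C i) →ₗ[𝕜] ∀ i : Fin (p + 2), C i :=
  diracUp d p + diracDown d p

/-- The `p`-th (Hodge) Laplacian `Δ_p = d_{p+1} ∘ d_{p+1}^* + d_p^* ∘ d_p`. -/
noncomputable def laplacian (d : ∀ n : ℕ, C n →ₗ[𝕜] C (n - 1)) (p : ℕ) :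
    C p →ₗ[𝕜] C p :=
  (d (p + 1) ∘ₗ adjoint (d (p + 1)) : C p →ₗ[𝕜] C p) + adjoint (d p) ∘ₗ d p

/-- The `p`-th down Laplacian `Δ_p^Down = d_p^* ∘ d_p`. -/
noncomputable def laplacianDown (d : ∀ n : ℕ, C n →ₗ[𝕜] C (n - 1)) (p : ℕ) :
    C p →ₗ[𝕜] C p :=
  adjoint (d p) ∘ₗ d p

lemma dirac_apply' (d : ∀ n : ℕ, C n →ₗ[𝕜] C (n - 1)) (p : ℕ)
    (v : ∀ i : Fin (p + 2), C i) (j : Fin (p + 2)) :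
    dirac d p v j =
      ((if h : (j : ℕ) + 1 < p + 2 then d ((j : ℕ) + 1) (v ⟨(j : ℕ) + 1, h⟩) else 0 : C (j : ℕ))) +
      (if h : 0 < (j : ℕ) then
        adjoint (d (j : ℕ)) (v ⟨(j : ℕ) - 1, lt_of_le_of_lt (Nat.sub_le _ _) j.isLt⟩) else 0) := by
  show diracUp d p v j + diracDown d p v j = _
  congr 1
  · simp only [diracUp, LinearMap.pi_apply]
    split <;> rfl
  · simp only [diracDown, LinearMap.pi_apply]
    split <;> rfl

section
variable (d : ∀ n : ℕ, C n →ₗ[𝕜] C (n - 1))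

lemma dd_zero (hd : ∀ n : ℕ, (d n).comp (d (n + 1)) = 0) (n : ℕ) (x : C (n + 1)) :
    d n (d (n + 1) x) = 0 := by
  have := DFunLike.congr_fun (hd n) x
  simpa using this

lemma adj_adj_zero (hd : ∀ n : ℕ, (d n).comp (d (n + 1)) = 0) (n : ℕ) (x : C (n - 1)) :
    adjoint (d (n + 1)) (adjoint (d n) x) = 0 := by
  have h := congrArg LinearMap.adjoint (hd n)
  rw [LinearMap.adjoint_comp, map_zero] at h
  have := DFunLike.congr_fun h x
  simpa using this

lemma dirac_sq_mid (hd0 : d 0 = 0) (hd : ∀ n : ℕ, (d n).comp (d (n + 1)) = 0) (p : ℕ)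
    (v : ∀ i : Fin (p + 2), C i) (j : Fin (p + 2)) (hj : (j : ℕ) ≤ p) :
    dirac d p (dirac d p v) j = laplacian d (j : ℕ) (v j) := by
  obtain ⟨jn, hjn⟩ := j
  simp only at hj ⊢
  rw [dirac_apply']
  simp only
  have h1 : jn + 1 < p + 2 := by omega
  rw [dif_pos h1, dirac_apply']
  simp only [laplacian, LinearMap.add_apply, LinearMap.comp_apply]
  match jn, hj, hjn with
  | 0, _, hjn =>
    rw [dif_neg (by omega : ¬ 0 < 0)]
    rw [dif_pos (by omega : 0 < 0 + 1)]
    rw [hd0]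
    by_cases h2 : 0 + 1 + 1 < p + 2
    · rw [dif_pos h2]
      simp only [dd_zero d hd, LinearMap.zero_apply, map_add, map_zero, add_zero, zero_add]
    · rw [dif_neg h2]
      simp only [LinearMap.zero_apply, map_add, map_zero, add_zero, zero_add]
  | (n + 1), hj, hjn =>
    rw [dif_pos (by omega : 0 < n + 1)]
    have e2 : (dirac d p) v (⟨n + 1 - 1, by omega⟩ : Fin (p + 2)) =
        (dirac d p) v ⟨n, by omega⟩ := rfl
    rw [e2, dirac_apply']
    simp only
    rw [dif_pos (by omega : n + 1 < p + 2)]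
    rw [dif_pos (by omega : 0 < n + 1 + 1)]
    by_cases h2 : n + 1 + 1 + 1 < p + 2
    · rw [dif_pos h2]
      by_cases h3 : 0 < n
      · rw [dif_pos h3]
        simp only [dd_zero d hd, adj_adj_zero d hd, map_add, map_zero, add_zero, zero_add]
        rfl
      · rw [dif_neg h3]
        simp only [dd_zero d hd, map_add, map_zero, add_zero, zero_add]
        rfl
    · rw [dif_neg h2]
      by_cases h3 : 0 < n
      · rw [dif_pos h3]
        simp only [adj_adj_zero d hd, map_add, map_zero, add_zero, zero_add]
        rfl
      · rw [dif_neg h3]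
        simp only [map_add, map_zero, add_zero, zero_add]
        rfl

lemma dirac_sq_last (hd : ∀ n : ℕ, (d n).comp (d (n + 1)) = 0) (p : ℕ)
    (v : ∀ i : Fin (p + 2), C i) :
    dirac d p (dirac d p v) (Fin.last (p + 1)) =
      laplacianDown d (p + 1) (v (Fin.last (p + 1))) := by
  rw [dirac_apply']
  simp only [Fin.val_last]
  rw [dif_neg (by omega : ¬ p + 1 + 1 < p + 2)]
  rw [dif_pos (by omega : 0 < p + 1)]
  have e2 : (dirac d p) v (⟨p + 1 - 1, by omega⟩ : Fin (p + 2)) =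
      (dirac d p) v ⟨p, by omega⟩ := rfl
  rw [e2, dirac_apply']
  simp only [laplacianDown, LinearMap.comp_apply, zero_add]
  rw [dif_pos (by omega : p + 1 < p + 2)]
  by_cases h3 : 0 < p
  · rw [dif_pos h3]
    simp only [adj_adj_zero d hd, map_add, map_zero, add_zero, zero_add]
    rfl
  · rw [dif_neg h3]
    simp only [map_add, map_zero, add_zero, zero_add]
    rfl

end

noncomputable def eps (p : ℕ) : (∀ i : Fin (p + 2), C i) →ₗ[𝕜] ∀ i : Fin (p + 2), C i :=
  LinearMap.pi fun j => ((-1 : 𝕜) ^ (j : ℕ)) • LinearMap.proj j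

lemma eps_apply (p : ℕ) (v : ∀ i : Fin (p + 2), C i) (j : Fin (p + 2)) :
    eps (𝕜 := 𝕜) p v j = ((-1 : 𝕜) ^ (j : ℕ)) • v j := rfl

lemma eps_eps (p : ℕ) (v : ∀ i : Fin (p + 2), C i) : eps (𝕜 := 𝕜) p (eps (𝕜 := 𝕜) p v) = v := by
  funext j
  rw [eps_apply, eps_apply, smul_smul, ← mul_pow, neg_mul_neg, one_mul, one_pow, one_smul]

lemma dirac_eps (d : ∀ n : ℕ, C n →ₗ[𝕜] C (n - 1)) (p : ℕ) (v : ∀ i : Fin (p + 2), C i) :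
    dirac d p (eps (𝕜 := 𝕜) p v) = - eps (𝕜 := 𝕜) p (dirac d p v) := by
  funext j
  have hR : (- eps (𝕜 := 𝕜) p (dirac d p v)) j = -(((-1 : 𝕜) ^ (j : ℕ)) • (dirac d p v) j) := rfl
  rw [dirac_apply' d p (eps (𝕜 := 𝕜) p v) j, hR, dirac_apply' d p v j]
  obtain ⟨jn, hjn⟩ := j
  simp only
  have hup : ((-1 : 𝕜) ^ (jn + 1)) = -(-1 : 𝕜) ^ jn := by rw [pow_succ]; ring
  by_cases h1 : jn + 1 < p + 2
  · rw [dif_pos h1, dif_pos h1]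
    have eu : (eps (𝕜 := 𝕜) p v) (⟨jn + 1, h1⟩ : Fin (p + 2)) =
        ((-1 : 𝕜) ^ (jn + 1)) • v ⟨jn + 1, h1⟩ := rfl
    by_cases h2 : 0 < jn
    · rw [dif_pos h2, dif_pos h2]
      have hdn : ((-1 : 𝕜) ^ (jn - 1)) = -(-1 : 𝕜) ^ jn := by
        obtain ⟨m, rfl⟩ : ∃ m, jn = m + 1 := ⟨jn - 1, by omega⟩
        simp only [Nat.add_sub_cancel]
        rw [pow_succ, mul_neg_one, neg_neg]
      have ed : (eps (𝕜 := 𝕜) p v) (⟨jn - 1, lt_of_le_of_lt (Nat.sub_le _ _) hjn⟩ : Fin (p + 2)) =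
          ((-1 : 𝕜) ^ (jn - 1)) • v ⟨jn - 1, lt_of_le_of_lt (Nat.sub_le _ _) hjn⟩ := rfl
      rw [eu, ed, map_smul, map_smul, hup, hdn, neg_smul, neg_smul, ← neg_add, smul_add]
    · rw [dif_neg h2, dif_neg h2]
      rw [eu, map_smul, hup, add_zero, add_zero, neg_smul]
  · rw [dif_neg h1, dif_neg h1]
    by_cases h2 : 0 < jn
    · rw [dif_pos h2, dif_pos h2]
      have hdn : ((-1 : 𝕜) ^ (jn - 1)) = -(-1 : 𝕜) ^ jn := by
        obtain ⟨m, rfl⟩ : ∃ m, jn = m + 1 := ⟨jn - 1, by omega⟩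
        simp only [Nat.add_sub_cancel]
        rw [pow_succ, mul_neg_one, neg_neg]
      have ed : (eps (𝕜 := 𝕜) p v) (⟨jn - 1, lt_of_le_of_lt (Nat.sub_le _ _) hjn⟩ : Fin (p + 2)) =
          ((-1 : 𝕜) ^ (jn - 1)) • v ⟨jn - 1, lt_of_le_of_lt (Nat.sub_le _ _) hjn⟩ := rfl
      rw [ed, map_smul, hdn, zero_add, zero_add, neg_smul]
    · rw [dif_neg h2, dif_neg h2]
      simp

lemma eps_eigen (d : ∀ n : ℕ, C n →ₗ[𝕜] C (n - 1)) (p : ℕ) (μ : 𝕜)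
    (h : Module.End.HasEigenvalue (dirac d p) μ) :
    Module.End.HasEigenvalue (dirac d p) (-μ) := by
  obtain ⟨v, hv⟩ := h.exists_hasEigenvector
  have hDv : dirac d p v = μ • v := Module.End.mem_eigenspace_iff.mp hv.1
  refine Module.End.hasEigenvalue_of_hasEigenvector
    (x := eps (𝕜 := 𝕜) p v) ⟨Module.End.mem_eigenspace_iff.mpr ?_, ?_⟩
  · rw [dirac_eps, hDv, map_smul, neg_smul]
  · intro h0
    apply hv.2
    rw [← eps_eps (𝕜 := 𝕜) p v, h0, map_zero]

lemma sqrt_pair (d : ∀ n : ℕ, C n →ₗ[𝕜] C (n - 1)) (p : ℕ) (lam : ℝ) (hlam : 0 ≤ lam)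
    (v : ∀ i : Fin (p + 2), C i) (hv0 : v ≠ 0)
    (hv2 : dirac d p (dirac d p v) = ((lam : 𝕜)) • v) :
    Module.End.HasEigenvalue (dirac d p) ((Real.sqrt lam : ℝ) : 𝕜) ∧
      Module.End.HasEigenvalue (dirac d p) (-((Real.sqrt lam : ℝ) : 𝕜)) := by
  set s : 𝕜 := ((Real.sqrt lam : ℝ) : 𝕜) with hs
  have hss : s * s = (lam : 𝕜) := by
    rw [hs, ← RCLike.ofReal_mul, Real.mul_self_sqrt hlam]
  by_cases hu : dirac d p v + s • v = 0
  · have hev : dirac d p v = (-s) • v := by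
      rw [neg_smul]
      exact eq_neg_of_add_eq_zero_left hu
    have h1 : Module.End.HasEigenvalue (dirac d p) (-s) :=
      Module.End.hasEigenvalue_of_hasEigenvector
        ⟨Module.End.mem_eigenspace_iff.mpr hev, hv0⟩
    exact ⟨by simpa using eps_eigen d p (-s) h1, h1⟩
  · have hDu : dirac d p (dirac d p v + s • v) = s • (dirac d p v + s • v) := by
      rw [map_add, map_smul, hv2, smul_add, smul_smul, hss]
      abel
    have h1 : Module.End.HasEigenvalue (dirac d p) s :=
      Module.End.hasEigenvalue_of_hasEigenvector
        ⟨Module.End.mem_eigenspace_iff.mpr hDu, hu⟩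
    exact ⟨h1, eps_eigen d p s h1⟩

/-- If `μ` is an eigenvalue of the Dirac operator `D_p`, then `μ²`
is an eigenvalue of some Laplacian `L_i` (`0 ≤ i ≤ p`) or of `L_{p+1}^Down`;
conversely, if `λ ≥ 0` is an eigenvalue of some `L_i` (`0 ≤ i ≤ p`) or of
`L_{p+1}^Down`, then `√λ` and `-√λ` are eigenvalues of `D_p`. -/
theorem statement12 (d : ∀ n : ℕ, C n →ₗ[𝕜] C (n - 1))
    (hd0 : d 0 = 0)
    (hd : ∀ n : ℕ, (d n).comp (d (n + 1)) = 0) (p : ℕ) :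
    (∀ μ : 𝕜, Module.End.HasEigenvalue (dirac d p) μ →
      (∃ i ≤ p, Module.End.HasEigenvalue (laplacian d i) (μ ^ 2)) ∨
        Module.End.HasEigenvalue (laplacianDown d (p + 1)) (μ ^ 2)) ∧
    (∀ lam : ℝ, 0 ≤ lam →
      ((∃ i ≤ p, Module.End.HasEigenvalue (laplacian d i) ((lam : 𝕜))) ∨
        Module.End.HasEigenvalue (laplacianDown d (p + 1)) ((lam : 𝕜))) →
      Module.End.HasEigenvalue (dirac d p) ((Real.sqrt lam : ℝ) : 𝕜) ∧
        Module.End.HasEigenvalue (dirac d p) (-((Real.sqrt lam : ℝ) : 𝕜))) := by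
  constructor
  · intro μ hμ
    obtain ⟨v, hv⟩ := hμ.exists_hasEigenvector
    have hDv : dirac d p v = μ • v := Module.End.mem_eigenspace_iff.mp hv.1
    have hD2 : dirac d p (dirac d p v) = (μ ^ 2) • v := by
      rw [hDv, map_smul, hDv, smul_smul, ← pow_two]
    obtain ⟨j, hj⟩ : ∃ j, v j ≠ 0 := by
      by_contra h
      push_neg at h
      exact hv.2 (funext h)
    by_cases hjp : (j : ℕ) ≤ p
    · left
      refine ⟨(j : ℕ), hjp, Module.End.hasEigenvalue_of_hasEigenvector
        ⟨Module.End.mem_eigenspace_iff.mpr ?_, hj⟩⟩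
      rw [← dirac_sq_mid d hd0 hd p v j hjp, hD2]
      rfl
    · right
      have hj' : j = Fin.last (p + 1) := by
        have := j.isLt
        ext
        simp only [Fin.val_last]
        omega
      subst hj'
      refine Module.End.hasEigenvalue_of_hasEigenvector
        ⟨Module.End.mem_eigenspace_iff.mpr ?_, hj⟩
      rw [← dirac_sq_last d hd p v, hD2]
      rfl
  · intro lam hlam hex
    rcases hex with ⟨i, hip, hL⟩ | hL
    · obtain ⟨w, hw⟩ := hL.exists_hasEigenvector
      have hLw : laplacian d i w = (lam : 𝕜) • w := Module.End.mem_eigenspace_iff.mp hw.1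
      set jF : Fin (p + 2) := ⟨i, by omega⟩ with hjF
      set v : ∀ k : Fin (p + 2), C k := Pi.single jF w with hv
      have hv0 : v ≠ 0 := by
        intro h0
        apply hw.2
        have := congrFun h0 jF
        rwa [hv, Pi.single_eq_same] at this
      refine sqrt_pair d p lam hlam v hv0 ?_
      funext j
      by_cases hjp : (j : ℕ) ≤ p
      · rw [dirac_sq_mid d hd0 hd p v j hjp]
        by_cases hji : j = jF
        · subst hji
          rw [hv, Pi.single_eq_same, Pi.smul_apply, Pi.single_eq_same]
          exact hLw
        · rw [hv, Pi.single_eq_of_ne hji, map_zero, Pi.smul_apply,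
            Pi.single_eq_of_ne hji, smul_zero]
      · have hj' : j = Fin.last (p + 1) := by
          have := j.isLt
          ext
          simp only [Fin.val_last]
          omega
        subst hj'
        have hne : Fin.last (p + 1) ≠ jF := by
          intro h
          have := congrArg Fin.val h
          simp only [Fin.val_last, hjF] at this
          omega
        rw [dirac_sq_last d hd p v, hv, Pi.single_eq_of_ne hne, map_zero,
          Pi.smul_apply, Pi.single_eq_of_ne hne, smul_zero]
    · obtain ⟨w, hw⟩ := hL.exists_hasEigenvector
      have hLw : laplacianDown d (p + 1) w = (lam : 𝕜) • w :=
        Module.End.mem_eigenspace_iff.mp hw.1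
      set jF : Fin (p + 2) := Fin.last (p + 1) with hjF
      set v : ∀ k : Fin (p + 2), C k := Pi.single jF w with hv
      have hv0 : v ≠ 0 := by
        intro h0
        apply hw.2
        have := congrFun h0 jF
        rwa [hv, Pi.single_eq_same] at this
      refine sqrt_pair d p lam hlam v hv0 ?_
      funext j
      by_cases hjp : (j : ℕ) ≤ p
      · have hne : j ≠ jF := by
          intro h
          have := congrArg Fin.val h
          simp only [Fin.val_last, hjF] at this
          omega
        rw [dirac_sq_mid d hd0 hd p v j hjp, hv, Pi.single_eq_of_ne hne, map_zero,
          Pi.smul_apply, Pi.single_eq_of_ne hne, smul_zero]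
      · have hj' : j = Fin.last (p + 1) := by
          have := j.isLt
          ext
          simp only [Fin.val_last]
          omega
        subst hj'
        rw [dirac_sq_last d hd p v, hv, Pi.single_eq_same, Pi.smul_apply, Pi.single_eq_same]
        exact hLw
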